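/- Let β > 0 and L > 1, and let x : [0,∞) → ℝ be differentiable with x'(t) = β·x(t)·(1 − x(t)) for all t ≥ 0 and x(0) = 1/L². Then x(t) ∈ (0,1) for all t ≥ 0, x is nondecreasing, and x(t) ≥ 1 − 1/L² for every t ≥ (4/β)·log L. That is, the logistic curve rises from level L^{−2} to level 1 − L^{−2} in time at most (4/β) log L. -/

import Mathlib

open Set Real Filter Topology

/-- Let `β > 0`, `L > 1` and let `x` solve the logistic ODE
`x' = β x (1 − x)` on `[0,∞)` with `x(0) = 1/L²`.  Then `x(t) ∈ (0,1)` for all `t ≥ 0`,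
`x` is nondecreasing on `[0,∞)`, and `x(t) ≥ 1 − 1/L²` for every `t ≥ (4/β) log L`:
the logistic curve rises from `L⁻²` to `1 − L⁻²` in time at most `(4/β) log L`. -/
theorem logistic_rise_time (β L : ℝ) (hβ : 0 < β) (hL : 1 < L) (x : ℝ → ℝ)
    (hderiv : ∀ t : ℝ, 0 ≤ t → HasDerivAt x (β * x t * (1 - x t)) t)
    (hx0 : x 0 = 1 / L ^ 2) :
    (∀ t : ℝ, 0 ≤ t → 0 < x t ∧ x t < 1) ∧
    MonotoneOn x (Set.Ici (0 : ℝ)) ∧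
    (∀ t : ℝ, (4 / β) * Real.log L ≤ t → 1 - 1 / L ^ 2 ≤ x t) := by
  have hL0 : (0:ℝ) < L := lt_trans one_pos hL
  have hL2 : (0:ℝ) < L ^ 2 - 1 := by nlinarith
  set c : ℝ := (L ^ 2 - 1)⁻¹ with hc
  have hc0 : 0 < c := inv_pos.mpr hL2
  set g : ℝ → ℝ := fun t => 1 - (1 + c * Real.exp (β * t))⁻¹ with hg
  have hD : ∀ t, 0 < 1 + c * Real.exp (β * t) := fun t => by positivity
  -- g satisfies the ODE everywhere
  have hgderiv : ∀ t : ℝ, HasDerivAt g (β * g t * (1 - g t)) t := by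
    intro t
    have h1 : HasDerivAt (fun t : ℝ => β * t) β t := by
      simpa using (hasDerivAt_id t).const_mul β
    have h2 : HasDerivAt (fun t : ℝ => 1 + c * Real.exp (β * t))
        (c * (Real.exp (β * t) * β)) t := ((h1.exp).const_mul c).const_add 1
    have h3 := (h2.inv (ne_of_gt (hD t))).const_sub 1
    refine h3.congr_deriv ?_
    have hDne : (1 + c * Real.exp (β * t)) ≠ 0 := ne_of_gt (hD t)
    simp only [hg]
    field_simp
    ring
  -- g stays in (0,1)
  have hg01 : ∀ t, 0 < g t ∧ g t < 1 := by
    intro t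
    constructor
    · have : (1 + c * Real.exp (β * t))⁻¹ < 1 := by
        rw [inv_lt_one_iff₀]
        right
        nlinarith [Real.exp_pos (β * t), hD t]
      simp only [hg]; linarith
    · have : 0 < (1 + c * Real.exp (β * t))⁻¹ := inv_pos.mpr (hD t)
      simp only [hg]; linarith
  -- g is monotone
  have hgmono : Monotone g := by
    intro a b hab
    simp only [hg]
    have h1 : 1 + c * Real.exp (β * a) ≤ 1 + c * Real.exp (β * b) := by
      have := Real.exp_le_exp.mpr (mul_le_mul_of_nonneg_left hab hβ.le)
      nlinarith
    have := inv_anti₀ (hD a) h1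
    linarith
  -- g 0 = x 0
  have hg0 : g 0 = 1 / L ^ 2 := by
    simp only [hg, mul_zero, Real.exp_zero, mul_one, hc]
    rw [eq_div_iff (by positivity)]
    field_simp
    ring
  -- Lipschitz bound for the vector field on Icc (-1) 2
  set K : NNReal := ⟨3 * β, by positivity⟩ with hK
  have hlip : ∀ t : ℝ, LipschitzOnWith K (fun u => β * u * (1 - u)) (Icc (-1:ℝ) 2) := by
    intro t
    rw [lipschitzOnWith_iff_dist_le_mul]
    intro u hu w hw
    have hu1 := hu.1; have hu2 := hu.2; have hw1 := hw.1; have hw2 := hw.2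
    rw [Real.dist_eq, Real.dist_eq]
    have key : β * u * (1 - u) - β * w * (1 - w) = β * ((u - w) * (1 - (u + w))) := by ring
    rw [key]
    have hKc : (K : ℝ) = 3 * β := rfl
    rw [hKc, abs_mul, abs_of_pos hβ, abs_mul]
    have h3 : |1 - (u + w)| ≤ 3 := by
      rw [abs_le]; constructor <;> nlinarith
    calc β * (|u - w| * |1 - (u + w)|) ≤ β * (|u - w| * 3) := by
          gcongr
      _ = 3 * β * |u - w| := by ring
  -- x is continuous at every nonneg time
  have hxc : ∀ t : ℝ, 0 ≤ t → ContinuousAt x t := fun t ht => (hderiv t ht).continuousAt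
  -- main uniqueness: x = g on Ici 0
  have hxg : ∀ T : ℝ, 0 ≤ T → x T = g T := by
    intro T hT
    set A : Set ℝ := {t | t ∈ Icc 0 T ∧ EqOn x g (Icc 0 t)} with hA
    have h0A : (0:ℝ) ∈ A := by
      refine ⟨⟨le_refl 0, hT⟩, ?_⟩
      intro s hs
      have : s = 0 := le_antisymm hs.2 hs.1
      rw [this, hx0, hg0]
    have hAne : A.Nonempty := ⟨0, h0A⟩
    have hAbdd : BddAbove A := ⟨T, fun t ht => ht.1.2⟩
    set τ := sSup A with hτ
    have hτ0 : 0 ≤ τ := le_csSup hAbdd h0A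
    have hτT : τ ≤ T := csSup_le hAne fun t ht => ht.1.2
    -- x = g on [0, τ)
    have heq_lt : ∀ s, 0 ≤ s → s < τ → x s = g s := by
      intro s hs0 hsτ
      obtain ⟨t, htA, hst⟩ := exists_lt_of_lt_csSup hAne hsτ
      exact htA.2 ⟨hs0, hst.le⟩
    -- x τ = g τ
    have heqτ : x τ = g τ := by
      rcases eq_or_lt_of_le hτ0 with h | h
      · rw [← h, hx0, hg0]
      · have hne : (𝓝[Iio τ] τ).NeBot := nhdsLT_neBot τ
        have hx_t : Filter.Tendsto x (𝓝[Iio τ] τ) (𝓝 (x τ)) :=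
          ((hxc τ hτ0).continuousWithinAt).tendsto
        have hg_t : Filter.Tendsto g (𝓝[Iio τ] τ) (𝓝 (g τ)) :=
          ((hgderiv τ).continuousAt.continuousWithinAt).tendsto
        have hev : x =ᶠ[𝓝[Iio τ] τ] g := by
          have hm : Ioo (0:ℝ) τ ∈ 𝓝[Iio τ] τ := Ioo_mem_nhdsLT_of_mem ⟨h, le_rfl⟩
          exact Filter.eventually_of_mem hm fun s hs => heq_lt s hs.1.le hs.2
        exact tendsto_nhds_unique (hx_t.congr' hev) hg_t
    -- τ = T
    have hτeq : τ = T := by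
      by_contra hne
      have hτltT : τ < T := lt_of_le_of_ne hτT hne
      -- x τ = g τ ∈ (0,1) ⊂ Ioo (-1) 2
      have hxτmem : x τ ∈ Ioo (-1:ℝ) 2 := by
        rw [heqτ]; exact ⟨by linarith [(hg01 τ).1], by linarith [(hg01 τ).2]⟩
      have hev : ∀ᶠ s in 𝓝 τ, x s ∈ Ioo (-1:ℝ) 2 :=
        (hxc τ hτ0).eventually_mem (isOpen_Ioo.mem_nhds hxτmem)
      obtain ⟨δ, hδ0, hδ⟩ := Metric.eventually_nhds_iff.mp hev
      set ε := min (δ / 2) (T - τ) with hε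
      have hε0 : 0 < ε := lt_min (by linarith) (by linarith)
      have hmem : ∀ s ∈ Icc τ (τ + ε), x s ∈ Icc (-1:ℝ) 2 := by
        intro s hs
        have : dist s τ < δ := by
          rw [Real.dist_eq, abs_of_nonneg (by linarith [hs.1])]
          have : ε ≤ δ / 2 := min_le_left _ _
          linarith [hs.2]
        exact Ioo_subset_Icc_self (hδ this)
      have huniq : EqOn x g (Icc τ (τ + ε)) := by
        apply ODE_solution_unique_of_mem_Icc_right (v := fun _ u => β * u * (1 - u))
          (s := fun _ => Icc (-1:ℝ) 2) (fun t _ => hlip t)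
        · exact fun s hs => ((hxc s (by linarith [hs.1])).continuousWithinAt)
        · intro s hs
          exact (hderiv s (by linarith [hs.1])).hasDerivWithinAt
        · exact fun s hs => hmem s (Ico_subset_Icc_self hs)
        · exact fun s hs => ((hgderiv s).continuousAt.continuousWithinAt)
        · exact fun s hs => (hgderiv s).hasDerivWithinAt
        · intro s hs
          exact ⟨by linarith [(hg01 s).1], by linarith [(hg01 s).2]⟩
        · exact heqτ
      have hmemA : τ + ε ∈ A := by
        have hεT : ε ≤ T - τ := min_le_right _ _
        refine ⟨⟨by linarith, by linarith⟩, ?_⟩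
        intro s hs
        rcases le_or_gt s τ with h | h
        · rcases eq_or_lt_of_le h with h' | h'
          · rw [h']; exact heqτ
          · exact heq_lt s hs.1 h'
        · exact huniq ⟨h.le, hs.2⟩
      have := le_csSup hAbdd hmemA
      linarith
    rw [← hτeq]
    exact heqτ
  constructor
  · intro t ht
    rw [hxg t ht]; exact hg01 t
  constructor
  · intro a ha b hb hab
    rw [hxg a ha, hxg b hb]
    exact hgmono hab
  · intro t ht
    have ht0 : 0 ≤ t := by
      have : 0 ≤ (4 / β) * Real.log L := mul_nonneg (by positivity) (Real.log_nonneg hL.le)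
      linarith
    rw [hxg t ht0]
    have key : 1 - 1 / L ^ 2 ≤ g ((4 / β) * Real.log L) := by
      simp only [hg]
      have hexp : Real.exp (β * ((4 / β) * Real.log L)) = L ^ 4 := by
        rw [show β * ((4 / β) * Real.log L) = ((4:ℕ):ℝ) * Real.log L by
          push_cast; field_simp]
        rw [Real.exp_nat_mul, Real.exp_log hL0]
      rw [hexp]
      have h1 : L ^ 2 - 1 ≤ c * L ^ 4 := by
        rw [hc, inv_mul_eq_div, le_div_iff₀ hL2]
        nlinarith
      have h2 : L ^ 2 ≤ 1 + c * L ^ 4 := by linarith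
      have h3 : (1 + c * L ^ 4)⁻¹ ≤ (L ^ 2)⁻¹ := by
        apply inv_anti₀ (by positivity) h2
      rw [one_div]
      linarith
    calc 1 - 1 / L ^ 2 ≤ g ((4 / β) * Real.log L) := key
      _ ≤ g t := hgmono ht
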